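/- arXiv:2412.14461 — 4 statements merged into one kernel-verified Lean document; each statement's English description precedes it below -/
import Mathlib

section
/- (Lemma 1, bias-aware decomposition.) Under symmetric label noise with error rate e and positive class masses, for every measurable LLM labeler ŷ : Ω → Fin K the reference agreement decomposes as A_R(ŷ) = a·A_T(ŷ) + b + J(ŷ), where a = (1−e) − e/(K−1), b = e/(K−1), A_T(ŷ) = μ({ŷ = y}) is the true agreement, A_R(ŷ) = μ({ŷ = r}) is the reference agreement, and J(ŷ) is the co-labeling covariance. -/
open MeasureTheory

/-- True agreement `A_T(ŷ) = μ({ŷ = y})`. -/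
noncomputable def trueAgree {Ω : Type*} [MeasurableSpace Ω] {K : ℕ}
    (μ : Measure Ω) (y yhat : Ω → Fin K) : ℝ :=
  (μ {ω | yhat ω = y ω}).toReal

/-- Reference agreement `A_R(ŷ) = μ({ŷ = r})`. -/
noncomputable def refAgree {Ω : Type*} [MeasurableSpace Ω] {K : ℕ}
    (μ : Measure Ω) (r yhat : Ω → Fin K) : ℝ :=
  (μ {ω | yhat ω = r ω}).toReal

/-- Co-labeling covariance
`J(ŷ) = ∑ₖ ∑ₗ [ μ({ŷ=ℓ}∩{r=ℓ}∩{y=k}) − μ({ŷ=ℓ}∩{y=k})·μ({r=ℓ}∩{y=k}) / μ({y=k}) ]`. -/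
noncomputable def coLabelCov {Ω : Type*} [MeasurableSpace Ω] {K : ℕ}
    (μ : Measure Ω) (y r yhat : Ω → Fin K) : ℝ :=
  ∑ k : Fin K, ∑ l : Fin K,
    ((μ ({ω | yhat ω = l} ∩ {ω | r ω = l} ∩ {ω | y ω = k})).toReal
      - (μ ({ω | yhat ω = l} ∩ {ω | y ω = k})).toReal
          * (μ ({ω | r ω = l} ∩ {ω | y ω = k})).toReal
          / (μ {ω | y ω = k}).toReal)

lemma part_sum {Ω : Type*} [MeasurableSpace Ω] {K : ℕ}
    (μ : Measure Ω) [IsFiniteMeasure μ] (f : Ω → Fin K) (hf : Measurable f)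
    (s : Set Ω) (hs : MeasurableSet s) :
    (μ s).toReal = ∑ l : Fin K, (μ (s ∩ {ω | f ω = l})).toReal := by
  have h : s = ⋃ l : Fin K, s ∩ {ω | f ω = l} := by
    ext ω; simp
  have hd : Pairwise (Function.onFun Disjoint (fun l : Fin K => s ∩ {ω | f ω = l})) := by
    intro a b hab
    refine Set.disjoint_left.2 ?_
    rintro ω ⟨-, ha⟩ ⟨-, hb⟩
    exact hab (ha.symm.trans hb)
  have hm : ∀ l : Fin K, MeasurableSet (s ∩ {ω | f ω = l}) :=
    fun l => hs.inter (hf (MeasurableSet.singleton l))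
  have hu := measure_iUnion (μ := μ) hd hm
  rw [tsum_fintype] at hu
  calc (μ s).toReal = (∑ l : Fin K, μ (s ∩ {ω | f ω = l})).toReal := by rw [← hu, ← h]
    _ = ∑ l : Fin K, (μ (s ∩ {ω | f ω = l})).toReal :=
        ENNReal.toReal_sum (fun l _ => (measure_lt_top μ _).ne)

/-- **Lemma 1, bias-aware decomposition.** Under symmetric label noise
with error rate `e ∈ [0,1)` and positive class masses, for every measurable labeler
`ŷ`, `A_R(ŷ) = a·A_T(ŷ) + b + J(ŷ)` with `a = (1−e) − e/(K−1)` and `b = e/(K−1)`. -/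
theorem bias_aware_decomposition
    {Ω : Type*} [MeasurableSpace Ω] {K : ℕ} (hK : 2 ≤ K)
    (e : ℝ) (he0 : 0 ≤ e) (he1 : e < 1)
    (μ : Measure Ω) [IsProbabilityMeasure μ]
    (y r : Ω → Fin K) (hy : Measurable y) (hr : Measurable r)
    (hnoise_diag : ∀ k : Fin K,
      (μ ({ω | r ω = k} ∩ {ω | y ω = k})).toReal
        = (1 - e) * (μ {ω | y ω = k}).toReal)
    (hnoise_off : ∀ k l : Fin K, l ≠ k →
      (μ ({ω | r ω = l} ∩ {ω | y ω = k})).toReal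
        = e / ((K : ℝ) - 1) * (μ {ω | y ω = k}).toReal)
    (hpos : ∀ k : Fin K, 0 < μ {ω | y ω = k})
    (yhat : Ω → Fin K) (hyhat : Measurable yhat) :
    refAgree μ r yhat
      = ((1 - e) - e / ((K : ℝ) - 1)) * trueAgree μ y yhat
        + e / ((K : ℝ) - 1)
        + coLabelCov μ y r yhat := by
  classical
  set c : ℝ := e / ((K : ℝ) - 1) with hc
  -- abbreviations
  set m : Fin K → ℝ := fun k => (μ {ω | y ω = k}).toReal with hm
  set P : Fin K → Fin K → ℝ :=
    fun k l => (μ ({ω | yhat ω = l} ∩ {ω | y ω = k})).toReal with hP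
  set Q : Fin K → Fin K → ℝ :=
    fun k l => (μ ({ω | r ω = l} ∩ {ω | y ω = k})).toReal with hQ
  set T : Fin K → Fin K → ℝ :=
    fun k l => (μ ({ω | yhat ω = l} ∩ {ω | r ω = l} ∩ {ω | y ω = k})).toReal with hT
  have hsetY : ∀ k : Fin K, MeasurableSet {ω | y ω = k} :=
    fun k => hy (MeasurableSet.singleton k)
  have hEqR : MeasurableSet {ω | yhat ω = r ω} :=
    measurableSet_eq_fun hyhat hr
  have hEqY : MeasurableSet {ω | yhat ω = y ω} :=
    measurableSet_eq_fun hyhat hy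
  have mpos : ∀ k, 0 < m k := fun k =>
    ENNReal.toReal_pos (hpos k).ne' (measure_lt_top μ _).ne
  -- expansion of the reference agreement
  have hAR : refAgree μ r yhat = ∑ k : Fin K, ∑ l : Fin K, T k l := by
    rw [refAgree, part_sum μ y hy _ hEqR]
    refine Finset.sum_congr rfl fun k _ => ?_
    rw [part_sum μ yhat hyhat _ (hEqR.inter (hsetY k))]
    refine Finset.sum_congr rfl fun l _ => ?_
    have hset : {ω | yhat ω = r ω} ∩ {ω | y ω = k} ∩ {ω | yhat ω = l}
        = {ω | yhat ω = l} ∩ {ω | r ω = l} ∩ {ω | y ω = k} := by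
      ext ω
      simp only [Set.mem_inter_iff, Set.mem_setOf_eq]
      constructor
      · rintro ⟨⟨h1, h2⟩, h3⟩; exact ⟨⟨h3, h1.symm.trans h3⟩, h2⟩
      · rintro ⟨⟨h1, h2⟩, h3⟩; exact ⟨⟨h1.trans h2.symm, h3⟩, h1⟩
    rw [hset]
  -- expansion of the true agreement
  have hAT : trueAgree μ y yhat = ∑ k : Fin K, P k k := by
    rw [trueAgree, part_sum μ y hy _ hEqY]
    refine Finset.sum_congr rfl fun k _ => ?_
    have hset : {ω | yhat ω = y ω} ∩ {ω | y ω = k}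
        = {ω | yhat ω = k} ∩ {ω | y ω = k} := by
      ext ω
      simp only [Set.mem_inter_iff, Set.mem_setOf_eq]
      constructor
      · rintro ⟨h1, h2⟩; exact ⟨h1.trans h2, h2⟩
      · rintro ⟨h1, h2⟩; exact ⟨h1.trans h2.symm, h2⟩
    rw [hset]
  -- row sums of P
  have hrow : ∀ k : Fin K, ∑ l : Fin K, P k l = m k := by
    intro k
    rw [hm]
    simp only
    rw [part_sum μ yhat hyhat _ (hsetY k)]
    refine Finset.sum_congr rfl fun l _ => ?_
    simp only [hP]
    rw [Set.inter_comm]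
  -- total mass
  have htot : ∑ k : Fin K, m k = 1 := by
    have h := part_sum μ y hy Set.univ MeasurableSet.univ
    simp only [Set.univ_inter, measure_univ, ENNReal.toReal_one] at h
    exact h.symm
  -- key computation of the correction term
  have hkey : ∀ k : Fin K, ∑ l : Fin K, P k l * Q k l / m k
      = (1 - e) * P k k + c * (m k - P k k) := by
    intro k
    have hmne : m k ≠ 0 := (mpos k).ne'
    have hdiag : Q k k = (1 - e) * m k := hnoise_diag k
    rw [← Finset.sum_erase_add _ _ (Finset.mem_univ k)]
    have hoff : ∑ l ∈ Finset.univ.erase k, P k l * Q k l / m k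
        = c * (m k - P k k) := by
      rw [Finset.sum_congr rfl (fun l hl => ?_)]
      · rw [← Finset.mul_sum]
        congr 1
        have := Finset.sum_erase_add Finset.univ (P k) (Finset.mem_univ k)
        rw [hrow k] at this
        linarith
      · have hlk : l ≠ k := Finset.ne_of_mem_erase hl
        have hQl : Q k l = c * m k := hnoise_off k l hlk
        rw [hQl]
        field_simp
    rw [hoff, hdiag]
    field_simp
    ring
  -- expansion of the covariance
  have hJ : coLabelCov μ y r yhat
      = (∑ k : Fin K, ∑ l : Fin K, T k l)
        - ((1 - e) * (∑ k : Fin K, P k k) + c * (1 - ∑ k : Fin K, P k k)) := by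
    rw [coLabelCov]
    have : ∀ k : Fin K, ∑ l : Fin K, (T k l - P k l * Q k l / m k)
        = (∑ l : Fin K, T k l) - ((1 - e) * P k k + c * (m k - P k k)) := by
      intro k
      rw [Finset.sum_sub_distrib, hkey k]
    calc (∑ k : Fin K, ∑ l : Fin K, (T k l - P k l * Q k l / m k))
        = ∑ k : Fin K, ((∑ l : Fin K, T k l)
            - ((1 - e) * P k k + c * (m k - P k k))) :=
          Finset.sum_congr rfl (fun k _ => this k)
      _ = (∑ k : Fin K, ∑ l : Fin K, T k l)
            - ((1 - e) * (∑ k : Fin K, P k k) + c * (1 - ∑ k : Fin K, P k k)) := by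
          rw [Finset.sum_sub_distrib, Finset.sum_add_distrib, ← Finset.mul_sum,
            ← Finset.mul_sum, Finset.sum_sub_distrib, htot]
  rw [hAR, hAT, hJ]
  ring
end

section
/- (Per-class decomposition, intermediate step in the proof of Lemma 1.) Under symmetric label noise with error rate e and positive class masses, for every measurable LLM labeler ŷ : Ω → Fin K and every class k, μ({ŷ = r} ∩ {y = k}) = a·μ({ŷ = k} ∩ {y = k}) + b·μ({y = k}) + ∑_{ℓ} [ μ({ŷ = ℓ} ∩ {r = ℓ} ∩ {y = k}) − μ({ŷ = ℓ} ∩ {y = k})·μ({r = ℓ} ∩ {y = k}) / μ({y = k}) ], where a = (1−e) − e/(K−1) and b = e/(K−1). -/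
open MeasureTheory

/-- Measurement error `ε(ŷ) = 1 − A_T(ŷ)`. -/
noncomputable def measError {Ω : Type*} [MeasurableSpace Ω] {K : ℕ}
    (μ : Measure Ω) (y yhat : Ω → Fin K) : ℝ :=
  1 - trueAgree μ y yhat

/-- **per-class decomposition.** Under symmetric label noise with
error rate `e ∈ [0,1)` and positive class masses, for every measurable labeler `ŷ`
and every class `k`,
`μ({ŷ=r}∩{y=k}) = a·μ({ŷ=k}∩{y=k}) + b·μ({y=k}) + ∑ₗ [co-labeling terms]`,
where `a = (1−e) − e/(K−1)` and `b = e/(K−1)`. -/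
theorem per_class_decomposition
    {Ω : Type*} [MeasurableSpace Ω] {K : ℕ} (hK : 2 ≤ K)
    (e : ℝ) (he0 : 0 ≤ e) (he1 : e < 1)
    (μ : Measure Ω) [IsProbabilityMeasure μ]
    (y r : Ω → Fin K) (hy : Measurable y) (hr : Measurable r)
    (hnoise_diag : ∀ k : Fin K,
      (μ ({ω | r ω = k} ∩ {ω | y ω = k})).toReal
        = (1 - e) * (μ {ω | y ω = k}).toReal)
    (hnoise_off : ∀ k l : Fin K, l ≠ k →
      (μ ({ω | r ω = l} ∩ {ω | y ω = k})).toReal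
        = e / ((K : ℝ) - 1) * (μ {ω | y ω = k}).toReal)
    (hpos : ∀ k : Fin K, 0 < μ {ω | y ω = k})
    (yhat : Ω → Fin K) (hyhat : Measurable yhat) (k : Fin K) :
    (μ ({ω | yhat ω = r ω} ∩ {ω | y ω = k})).toReal
      = ((1 - e) - e / ((K : ℝ) - 1))
          * (μ ({ω | yhat ω = k} ∩ {ω | y ω = k})).toReal
        + e / ((K : ℝ) - 1) * (μ {ω | y ω = k}).toReal
        + ∑ l : Fin K,
            ((μ ({ω | yhat ω = l} ∩ {ω | r ω = l} ∩ {ω | y ω = k})).toReal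
              - (μ ({ω | yhat ω = l} ∩ {ω | y ω = k})).toReal
                  * (μ ({ω | r ω = l} ∩ {ω | y ω = k})).toReal
                  / (μ {ω | y ω = k}).toReal) := by
  classical
  set m : ℝ := (μ {ω | y ω = k}).toReal with hm
  have hm0 : m ≠ 0 := by
    have := (hpos k).ne'
    simp only [hm]
    exact ENNReal.toReal_ne_zero.2 ⟨this, (measure_ne_top μ _)⟩
  set P : Fin K → ℝ := fun l => (μ ({ω | yhat ω = l} ∩ {ω | y ω = k})).toReal with hP
  set T : Fin K → ℝ := fun l =>
    (μ ({ω | yhat ω = l} ∩ {ω | r ω = l} ∩ {ω | y ω = k})).toReal with hT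
  have hmsy : ∀ l : Fin K, MeasurableSet {ω | yhat ω = l} := fun l =>
    hyhat (measurableSet_singleton l)
  have hmsr : ∀ l : Fin K, MeasurableSet {ω | r ω = l} := fun l =>
    hr (measurableSet_singleton l)
  have hmsyk : MeasurableSet {ω | y ω = k} := hy (measurableSet_singleton k)
  -- Step 1: LHS = ∑ T l
  have hLHS : (μ ({ω | yhat ω = r ω} ∩ {ω | y ω = k})).toReal = ∑ l : Fin K, T l := by
    have hset : {ω | yhat ω = r ω} ∩ {ω | y ω = k}
        = ⋃ l : Fin K, ({ω | yhat ω = l} ∩ {ω | r ω = l} ∩ {ω | y ω = k}) := by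
      ext ω
      simp only [Set.mem_inter_iff, Set.mem_iUnion, Set.mem_setOf_eq]
      constructor
      · rintro ⟨h1, h2⟩; exact ⟨yhat ω, ⟨⟨rfl, h1.symm⟩, h2⟩⟩
      · rintro ⟨l, ⟨⟨h1, h2⟩, h3⟩⟩; exact ⟨h1.trans h2.symm, h3⟩
    have hdisj : Pairwise (Function.onFun Disjoint
        (fun l : Fin K => {ω | yhat ω = l} ∩ {ω | r ω = l} ∩ {ω | y ω = k})) := by
      intro i j hij
      refine Set.disjoint_left.2 ?_
      rintro ω ⟨⟨h1, _⟩, _⟩ ⟨⟨h2, _⟩, _⟩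
      exact hij (h1.symm.trans h2)
    have hmeas : ∀ l : Fin K, MeasurableSet
        ({ω | yhat ω = l} ∩ {ω | r ω = l} ∩ {ω | y ω = k}) := fun l =>
      (((hmsy l).inter (hmsr l)).inter hmsyk)
    rw [hset, measure_iUnion hdisj hmeas]
    rw [tsum_fintype]
    rw [ENNReal.toReal_sum (fun l _ => measure_ne_top μ _)]
  -- Step 2: ∑ P l = m
  have hPsum : ∑ l : Fin K, P l = m := by
    have hset : {ω | y ω = k} = ⋃ l : Fin K, ({ω | yhat ω = l} ∩ {ω | y ω = k}) := by
      ext ω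
      simp only [Set.mem_iUnion, Set.mem_inter_iff, Set.mem_setOf_eq]
      constructor
      · intro h; exact ⟨yhat ω, rfl, h⟩
      · rintro ⟨l, _, h⟩; exact h
    have hdisj : Pairwise (Function.onFun Disjoint
        (fun l : Fin K => {ω | yhat ω = l} ∩ {ω | y ω = k})) := by
      intro i j hij
      refine Set.disjoint_left.2 ?_
      rintro ω ⟨h1, _⟩ ⟨h2, _⟩
      exact hij (h1.symm.trans h2)
    have : μ {ω | y ω = k} = ∑ l : Fin K, μ ({ω | yhat ω = l} ∩ {ω | y ω = k}) := by
      conv_lhs => rw [hset]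
      rw [measure_iUnion hdisj (fun l => (hmsy l).inter hmsyk), tsum_fintype]
    simp only [hm, hP]
    rw [this, ENNReal.toReal_sum (fun l _ => measure_ne_top μ _)]
  -- noise values
  have hR : ∀ l : Fin K, (μ ({ω | r ω = l} ∩ {ω | y ω = k})).toReal
      = (if l = k then (1 - e) else e / ((K : ℝ) - 1)) * m := by
    intro l
    by_cases h : l = k
    · subst h; simp [hnoise_diag l, hm]
    · simp [h, hnoise_off k l h, hm]
  -- rewrite the covariance sum
  have hcov : ∀ l : Fin K,
      (μ ({ω | yhat ω = l} ∩ {ω | r ω = l} ∩ {ω | y ω = k})).toReal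
        - (μ ({ω | yhat ω = l} ∩ {ω | y ω = k})).toReal
            * (μ ({ω | r ω = l} ∩ {ω | y ω = k})).toReal
            / (μ {ω | y ω = k}).toReal
      = T l - (if l = k then (1 - e) else e / ((K : ℝ) - 1)) * P l := by
    intro l
    rw [hR l]
    have : P l * ((if l = k then (1 - e) else e / ((K : ℝ) - 1)) * m) / m
        = (if l = k then (1 - e) else e / ((K : ℝ) - 1)) * P l := by
      field_simp
    simp only [hT, hP] at this ⊢
    rw [← hm, this]
  rw [hLHS, Finset.sum_congr rfl (fun l _ => hcov l), Finset.sum_sub_distrib]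
  have hsplit : ∑ l : Fin K, (if l = k then (1 - e) else e / ((K : ℝ) - 1)) * P l
      = ((1 - e) - e / ((K : ℝ) - 1)) * P k + e / ((K : ℝ) - 1) * m := by
    have h1 : ∀ l : Fin K, (if l = k then (1 - e) else e / ((K : ℝ) - 1)) * P l
        = e / ((K : ℝ) - 1) * P l
          + (if l = k then ((1 - e) - e / ((K : ℝ) - 1)) * P l else 0) := by
      intro l; split <;> ring
    rw [Finset.sum_congr rfl (fun l _ => h1 l), Finset.sum_add_distrib,
      Finset.sum_ite_eq' Finset.univ k, ← Finset.mul_sum, hPsum]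
    simp; ring
  rw [hsplit]
  ring
end

section
/- (Proposition 1.) Under symmetric label noise with error rate e satisfying 0 ≤ e < (K−1)/K and positive class masses, for any two measurable LLM labelers ŷ₀, ŷ₁ : Ω → Fin K evaluated against the same ground truth y and the same reference r, the measurement-error difference satisfies ε(ŷ₁) − ε(ŷ₀) = −(A_T(ŷ₁) − A_T(ŷ₀)) = −(1/a)·( (A_R(ŷ₁) − A_R(ŷ₀)) − (J(ŷ₁) − J(ŷ₀)) ), where a = (1−e) − e/(K−1) > 0. -/
open MeasureTheory

section Aux

variable {Ω : Type*} [MeasurableSpace Ω] {K : ℕ}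

lemma partition_toReal (μ : Measure Ω) [IsProbabilityMeasure μ]
    (f : Ω → Fin K) (hf : Measurable f) (S : Set Ω) (hS : MeasurableSet S) :
    (μ S).toReal = ∑ k : Fin K, (μ (S ∩ {ω | f ω = k})).toReal := by
  have hU : (⋃ k : Fin K, S ∩ {ω | f ω = k}) = S := by
    ext ω; simp
  have hd : Pairwise (Function.onFun Disjoint (fun k => S ∩ {ω | f ω = k})) := by
    intro i j hij
    refine Set.disjoint_left.mpr ?_
    rintro ω ⟨-, hi⟩ ⟨-, hj⟩
    exact hij (hi.symm.trans hj)
  have hm : ∀ k : Fin K, MeasurableSet (S ∩ {ω | f ω = k}) :=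
    fun k => hS.inter (hf (measurableSet_singleton k))
  calc (μ S).toReal = (μ (⋃ k : Fin K, S ∩ {ω | f ω = k})).toReal := by rw [hU]
    _ = ∑ k : Fin K, (μ (S ∩ {ω | f ω = k})).toReal := by
        rw [measure_iUnion hd hm, tsum_fintype,
          ENNReal.toReal_sum (fun k _ => measure_ne_top μ _)]

lemma key_identity (e : ℝ)
    (μ : Measure Ω) [IsProbabilityMeasure μ]
    (y r : Ω → Fin K) (hy : Measurable y) (hr : Measurable r)
    (hnoise_diag : ∀ k : Fin K,
      (μ ({ω | r ω = k} ∩ {ω | y ω = k})).toReal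
        = (1 - e) * (μ {ω | y ω = k}).toReal)
    (hnoise_off : ∀ k l : Fin K, l ≠ k →
      (μ ({ω | r ω = l} ∩ {ω | y ω = k})).toReal
        = e / ((K : ℝ) - 1) * (μ {ω | y ω = k}).toReal)
    (hpos : ∀ k : Fin K, 0 < μ {ω | y ω = k})
    (yhat : Ω → Fin K) (hyhat : Measurable yhat) :
    refAgree μ r yhat - coLabelCov μ y r yhat
      = ((1 - e) - e / ((K : ℝ) - 1)) * trueAgree μ y yhat + e / ((K : ℝ) - 1) := by
  set c := e / ((K : ℝ) - 1) with hc
  have hmpos : ∀ k : Fin K, 0 < (μ {ω | y ω = k}).toReal := fun k =>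
    ENNReal.toReal_pos (hpos k).ne' (measure_ne_top μ _)
  -- measurability of basic sets
  have hYm : ∀ k : Fin K, MeasurableSet {ω | y ω = k} :=
    fun k => hy (measurableSet_singleton k)
  have hRm : ∀ l : Fin K, MeasurableSet {ω | r ω = l} :=
    fun l => hr (measurableSet_singleton l)
  have hHm : ∀ l : Fin K, MeasurableSet {ω | yhat ω = l} :=
    fun l => hyhat (measurableSet_singleton l)
  -- refAgree as a double sum of triple intersections
  have hRA : refAgree μ r yhat
      = ∑ k : Fin K, ∑ l : Fin K,
          (μ ({ω | yhat ω = l} ∩ {ω | r ω = l} ∩ {ω | y ω = k})).toReal := by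
    have hset : MeasurableSet {ω | yhat ω = r ω} := by
      have : {ω | yhat ω = r ω} = ⋃ l : Fin K, ({ω | yhat ω = l} ∩ {ω | r ω = l}) := by
        ext ω; simp only [Set.mem_setOf_eq, Set.mem_iUnion, Set.mem_inter_iff]
        constructor
        · intro h; exact ⟨r ω, h, rfl⟩
        · rintro ⟨l, h1, h2⟩; rw [h1, h2]
      rw [this]
      exact MeasurableSet.iUnion fun l => (hHm l).inter (hRm l)
    rw [refAgree, partition_toReal μ y hy _ hset]
    refine Finset.sum_congr rfl fun k _ => ?_
    rw [partition_toReal μ yhat hyhat _ (hset.inter (hYm k))]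
    refine Finset.sum_congr rfl fun l _ => ?_
    congr 2
    ext ω
    simp only [Set.mem_inter_iff, Set.mem_setOf_eq]
    constructor
    · rintro ⟨⟨h1, h2⟩, h3⟩; exact ⟨⟨h3, h3 ▸ h1.symm ▸ rfl⟩, h2⟩
    · rintro ⟨⟨h1, h2⟩, h3⟩; exact ⟨⟨h1.trans h2.symm, h3⟩, h1⟩
  -- trueAgree as a sum over diagonal
  have hTA : trueAgree μ y yhat
      = ∑ k : Fin K, (μ ({ω | yhat ω = k} ∩ {ω | y ω = k})).toReal := by
    have hset : MeasurableSet {ω | yhat ω = y ω} := by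
      have : {ω | yhat ω = y ω} = ⋃ l : Fin K, ({ω | yhat ω = l} ∩ {ω | y ω = l}) := by
        ext ω; simp only [Set.mem_setOf_eq, Set.mem_iUnion, Set.mem_inter_iff]
        constructor
        · intro h; exact ⟨y ω, h, rfl⟩
        · rintro ⟨l, h1, h2⟩; rw [h1, h2]
      rw [this]
      exact MeasurableSet.iUnion fun l => (hHm l).inter (hYm l)
    rw [trueAgree, partition_toReal μ y hy _ hset]
    refine Finset.sum_congr rfl fun k _ => ?_
    congr 2
    ext ω
    simp only [Set.mem_inter_iff, Set.mem_setOf_eq]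
    constructor
    · rintro ⟨h1, h2⟩; exact ⟨h1.trans h2, h2⟩
    · rintro ⟨h1, h2⟩; exact ⟨h1.trans h2.symm, h2⟩
  -- class masses sum to 1
  have hsum1 : ∑ k : Fin K, (μ {ω | y ω = k}).toReal = 1 := by
    have := partition_toReal μ y hy Set.univ MeasurableSet.univ
    simpa using this.symm
  -- inner marginal: ∑_l μ({ŷ=l}∩{y=k}) = μ({y=k})
  have hmarg : ∀ k : Fin K,
      ∑ l : Fin K, (μ ({ω | yhat ω = l} ∩ {ω | y ω = k})).toReal
        = (μ {ω | y ω = k}).toReal := by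
    intro k
    have := partition_toReal μ yhat hyhat {ω | y ω = k} (hYm k)
    rw [this]
    refine Finset.sum_congr rfl fun l _ => ?_
    rw [Set.inter_comm]
  rw [coLabelCov, hRA, hTA, ← Finset.sum_sub_distrib]
  have : ∀ k : Fin K,
      (∑ l : Fin K, (μ ({ω | yhat ω = l} ∩ {ω | r ω = l} ∩ {ω | y ω = k})).toReal)
        - (∑ l : Fin K,
            ((μ ({ω | yhat ω = l} ∩ {ω | r ω = l} ∩ {ω | y ω = k})).toReal
              - (μ ({ω | yhat ω = l} ∩ {ω | y ω = k})).toReal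
                  * (μ ({ω | r ω = l} ∩ {ω | y ω = k})).toReal
                  / (μ {ω | y ω = k}).toReal))
      = ((1 - e) - c) * (μ ({ω | yhat ω = k} ∩ {ω | y ω = k})).toReal
          + c * (μ {ω | y ω = k}).toReal := by
    intro k
    rw [← Finset.sum_sub_distrib]
    have hterm : ∀ l : Fin K,
        ((μ ({ω | yhat ω = l} ∩ {ω | r ω = l} ∩ {ω | y ω = k})).toReal
          - ((μ ({ω | yhat ω = l} ∩ {ω | r ω = l} ∩ {ω | y ω = k})).toReal
              - (μ ({ω | yhat ω = l} ∩ {ω | y ω = k})).toReal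
                  * (μ ({ω | r ω = l} ∩ {ω | y ω = k})).toReal
                  / (μ {ω | y ω = k}).toReal))
        = (if l = k then ((1 - e) - c) else 0)
            * (μ ({ω | yhat ω = l} ∩ {ω | y ω = k})).toReal
          + c * (μ ({ω | yhat ω = l} ∩ {ω | y ω = k})).toReal := by
      intro l
      by_cases h : l = k
      · subst h
        rw [hnoise_diag l, if_pos rfl]
        have hne := (hmpos l).ne'
        field_simp
        ring
      · rw [hnoise_off k l h]
        have hne := (hmpos k).ne'
        simp only [if_neg h]
        field_simp
        ring
    rw [Finset.sum_congr rfl fun l _ => hterm l, Finset.sum_add_distrib,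
      ← Finset.mul_sum, hmarg k]
    congr 1
    have hite : ∀ l : Fin K,
        (if l = k then ((1 - e) - c) else 0)
            * (μ ({ω | yhat ω = l} ∩ {ω | y ω = k})).toReal
          = if l = k then ((1 - e) - c)
              * (μ ({ω | yhat ω = l} ∩ {ω | y ω = k})).toReal else 0 := by
      intro l; split <;> simp
    rw [Finset.sum_congr rfl fun l _ => hite l, Finset.sum_ite_eq' Finset.univ k]
    simp
  rw [Finset.sum_congr rfl fun k _ => this k, Finset.sum_add_distrib,
    ← Finset.mul_sum, ← Finset.mul_sum, hsum1, mul_one]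

end Aux

/-- **Proposition 1.** Under symmetric label noise with
`0 ≤ e < (K−1)/K` and positive class masses, for labelers `ŷ₀, ŷ₁` against the
same `y` and `r`, with `a = (1−e) − e/(K−1) > 0`:
`ε(ŷ₁) − ε(ŷ₀) = −(A_T(ŷ₁) − A_T(ŷ₀))
  = −(1/a)·((A_R(ŷ₁) − A_R(ŷ₀)) − (J(ŷ₁) − J(ŷ₀)))`. -/
theorem measurement_error_difference
    {Ω : Type*} [MeasurableSpace Ω] {K : ℕ} (hK : 2 ≤ K)
    (e : ℝ) (he0 : 0 ≤ e) (he1 : e < ((K : ℝ) - 1) / K)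
    (μ : Measure Ω) [IsProbabilityMeasure μ]
    (y r : Ω → Fin K) (hy : Measurable y) (hr : Measurable r)
    (hnoise_diag : ∀ k : Fin K,
      (μ ({ω | r ω = k} ∩ {ω | y ω = k})).toReal
        = (1 - e) * (μ {ω | y ω = k}).toReal)
    (hnoise_off : ∀ k l : Fin K, l ≠ k →
      (μ ({ω | r ω = l} ∩ {ω | y ω = k})).toReal
        = e / ((K : ℝ) - 1) * (μ {ω | y ω = k}).toReal)
    (hpos : ∀ k : Fin K, 0 < μ {ω | y ω = k})
    (yhat₀ yhat₁ : Ω → Fin K) (hyhat₀ : Measurable yhat₀) (hyhat₁ : Measurable yhat₁) :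
    0 < (1 - e) - e / ((K : ℝ) - 1) ∧
    measError μ y yhat₁ - measError μ y yhat₀
      = -(trueAgree μ y yhat₁ - trueAgree μ y yhat₀) ∧
    measError μ y yhat₁ - measError μ y yhat₀
      = -(1 / ((1 - e) - e / ((K : ℝ) - 1)))
          * ((refAgree μ r yhat₁ - refAgree μ r yhat₀)
              - (coLabelCov μ y r yhat₁ - coLabelCov μ y r yhat₀)) := by
  have hKpos : (0:ℝ) < K := by positivity
  have hK1 : (1:ℝ) ≤ (K:ℝ) - 1 := by
    have : (2:ℝ) ≤ K := by exact_mod_cast hK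
    linarith
  have heK : e * K < (K:ℝ) - 1 := by
    have := (lt_div_iff₀ hKpos).mp he1
    linarith
  have ha : 0 < (1 - e) - e / ((K : ℝ) - 1) := by
    have hK1pos : (0:ℝ) < (K:ℝ) - 1 := by linarith
    have heq : (1 - e) - e / ((K : ℝ) - 1) = ((K:ℝ) - 1 - e * K) / ((K:ℝ) - 1) := by
      field_simp; ring
    rw [heq]
    exact div_pos (by linarith) hK1pos
  refine ⟨ha, by simp [measError], ?_⟩
  have h0 := key_identity e μ y r hy hr hnoise_diag hnoise_off hpos yhat₀ hyhat₀
  have h1 := key_identity e μ y r hy hr hnoise_diag hnoise_off hpos yhat₁ hyhat₁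
  have hane : ((1 - e) - e / ((K : ℝ) - 1)) ≠ 0 := ne_of_gt ha
  have hdiff : (refAgree μ r yhat₁ - refAgree μ r yhat₀)
      - (coLabelCov μ y r yhat₁ - coLabelCov μ y r yhat₀)
      = ((1 - e) - e / ((K : ℝ) - 1))
          * (trueAgree μ y yhat₁ - trueAgree μ y yhat₀) := by
    have := h1; have := h0; ring_nf at *; linarith
  simp only [measError]
  rw [hdiff]
  have h2 : ((1 - e) * ((K:ℝ) - 1) - e) ≠ 0 := by nlinarith
  have h3 : ((K:ℝ) - 1) ≠ 0 := by linarith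
  field_simp
  ring
end

section
/- (Inversion of the bias-aware decomposition.) Under symmetric label noise with error rate e satisfying 0 ≤ e < (K−1)/K (so a = (1−e) − e/(K−1) ≠ 0) and positive class masses, for every measurable LLM labeler ŷ : Ω → Fin K the true agreement is recovered from observables as A_T(ŷ) = (A_R(ŷ) − b − J(ŷ)) / a, where b = e/(K−1). -/
open MeasureTheory

lemma fiber_decomp {Ω : Type*} [MeasurableSpace Ω] {K : ℕ}
    (μ : Measure Ω) [IsFiniteMeasure μ]
    (f : Ω → Fin K) (hf : Measurable f) (s : Set Ω) (hs : MeasurableSet s) :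
    (μ s).toReal = ∑ k : Fin K, (μ (s ∩ {ω | f ω = k})).toReal := by
  rw [← ENNReal.toReal_sum (fun _ _ => measure_ne_top μ _)]
  congr 1
  have hse : s = ⋃ k ∈ Finset.univ, s ∩ {ω | f ω = k} := by ext ω; simp
  nth_rewrite 1 [hse]
  rw [measure_biUnion_finset]
  · intro a _ b _ hab
    exact Set.disjoint_left.2 fun ω ⟨_, ha⟩ ⟨_, hb⟩ => hab (ha ▸ hb ▸ rfl)
  · intro b _
    exact hs.inter (hf (measurableSet_singleton b))

/-- **inversion of the bias-aware decomposition.** Under symmetric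
label noise with `0 ≤ e < (K−1)/K` (so `a = (1−e) − e/(K−1) ≠ 0`) and positive
class masses, for every measurable labeler `ŷ`,
`A_T(ŷ) = (A_R(ŷ) − b − J(ŷ)) / a` with `b = e/(K−1)`. -/
theorem trueAgree_eq_of_decomposition
    {Ω : Type*} [MeasurableSpace Ω] {K : ℕ} (hK : 2 ≤ K)
    (e : ℝ) (he0 : 0 ≤ e) (he1 : e < ((K : ℝ) - 1) / K)
    (μ : Measure Ω) [IsProbabilityMeasure μ]
    (y r : Ω → Fin K) (hy : Measurable y) (hr : Measurable r)
    (hnoise_diag : ∀ k : Fin K,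
      (μ ({ω | r ω = k} ∩ {ω | y ω = k})).toReal
        = (1 - e) * (μ {ω | y ω = k}).toReal)
    (hnoise_off : ∀ k l : Fin K, l ≠ k →
      (μ ({ω | r ω = l} ∩ {ω | y ω = k})).toReal
        = e / ((K : ℝ) - 1) * (μ {ω | y ω = k}).toReal)
    (hpos : ∀ k : Fin K, 0 < μ {ω | y ω = k})
    (yhat : Ω → Fin K) (hyhat : Measurable yhat) :
    trueAgree μ y yhat
      = (refAgree μ r yhat - e / ((K : ℝ) - 1) - coLabelCov μ y r yhat)
          / ((1 - e) - e / ((K : ℝ) - 1)) := by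
  have hK2 : (2:ℝ) ≤ K := by exact_mod_cast hK
  have hd : (0:ℝ) < (K:ℝ) - 1 := by linarith
  have hK0 : (0:ℝ) < K := by linarith
  have hblt : e / ((K:ℝ) - 1) < 1 - e := by
    rw [div_lt_iff₀ hd]
    rw [lt_div_iff₀ hK0] at he1
    nlinarith
  have hb0 : 0 ≤ e / ((K:ℝ) - 1) := div_nonneg he0 hd.le
  set b : ℝ := e / ((K:ℝ) - 1) with hbdef
  have ha : 0 < (1 - e) - b := by linarith
  have hP0 : ∀ k : Fin K, 0 < (μ {ω | y ω = k}).toReal :=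
    fun k => ENNReal.toReal_pos (hpos k).ne' (measure_ne_top μ _)
  have hys : ∀ k : Fin K, MeasurableSet {ω | y ω = k} :=
    fun k => hy (measurableSet_singleton k)
  have hyh : ∀ k : Fin K, MeasurableSet {ω | yhat ω = k} :=
    fun k => hyhat (measurableSet_singleton k)
  have hrs : ∀ k : Fin K, MeasurableSet {ω | r ω = k} :=
    fun k => hr (measurableSet_singleton k)
  have hmr : MeasurableSet {ω | yhat ω = r ω} := by
    have h1 : {ω | yhat ω = r ω}
        = ⋃ l : Fin K, ({ω | yhat ω = l} ∩ {ω | r ω = l}) := by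
      ext ω
      simp only [Set.mem_setOf_eq, Set.mem_iUnion, Set.mem_inter_iff]
      exact ⟨fun h => ⟨r ω, h, rfl⟩, fun ⟨l, h1, h2⟩ => h1.trans h2.symm⟩
    rw [h1]; exact MeasurableSet.iUnion fun l => (hyh l).inter (hrs l)
  have hmy : MeasurableSet {ω | yhat ω = y ω} := by
    have h1 : {ω | yhat ω = y ω}
        = ⋃ l : Fin K, ({ω | yhat ω = l} ∩ {ω | y ω = l}) := by
      ext ω
      simp only [Set.mem_setOf_eq, Set.mem_iUnion, Set.mem_inter_iff]
      exact ⟨fun h => ⟨y ω, h, rfl⟩, fun ⟨l, h1, h2⟩ => h1.trans h2.symm⟩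
    rw [h1]; exact MeasurableSet.iUnion fun l => (hyh l).inter (hys l)
  have hAT : trueAgree μ y yhat
      = ∑ k : Fin K, (μ ({ω | yhat ω = k} ∩ {ω | y ω = k})).toReal := by
    rw [trueAgree, fiber_decomp μ y hy _ hmy]
    refine Finset.sum_congr rfl fun k _ => ?_
    congr 2
    ext ω
    simp only [Set.mem_inter_iff, Set.mem_setOf_eq]
    constructor
    · rintro ⟨h1, h2⟩
      subst h2
      exact ⟨h1, rfl⟩
    · rintro ⟨h1, h2⟩
      subst h1
      exact ⟨h2.symm, h2⟩
  have hAR : refAgree μ r yhat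
      = ∑ k : Fin K, ∑ l : Fin K,
          (μ ({ω | yhat ω = l} ∩ {ω | r ω = l} ∩ {ω | y ω = k})).toReal := by
    rw [refAgree, fiber_decomp μ y hy _ hmr]
    refine Finset.sum_congr rfl fun k _ => ?_
    rw [fiber_decomp μ yhat hyhat _ (hmr.inter (hys k))]
    refine Finset.sum_congr rfl fun l _ => ?_
    congr 2
    ext ω
    simp only [Set.mem_inter_iff, Set.mem_setOf_eq]
    constructor
    · rintro ⟨⟨h1, h2⟩, h3⟩
      subst h3
      exact ⟨⟨rfl, h1.symm⟩, h2⟩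
    · rintro ⟨⟨h1, h2⟩, h3⟩
      subst h1
      exact ⟨⟨h2.symm, h3⟩, rfl⟩
  have hQsum : ∀ k : Fin K,
      ∑ l : Fin K, (μ ({ω | yhat ω = l} ∩ {ω | y ω = k})).toReal
        = (μ {ω | y ω = k}).toReal := by
    intro k
    rw [fiber_decomp μ yhat hyhat _ (hys k)]
    exact Finset.sum_congr rfl fun l _ => by rw [Set.inter_comm]
  have hPsum : ∑ k : Fin K, (μ {ω | y ω = k}).toReal = 1 := by
    have h := fiber_decomp μ y hy Set.univ MeasurableSet.univ
    simpa [Set.univ_inter] using h.symm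
  have hterm : ∀ k l : Fin K,
      (μ ({ω | yhat ω = l} ∩ {ω | y ω = k})).toReal
        * (μ ({ω | r ω = l} ∩ {ω | y ω = k})).toReal
        / (μ {ω | y ω = k}).toReal
      = b * (μ ({ω | yhat ω = l} ∩ {ω | y ω = k})).toReal
        + (if l = k then ((1 - e) - b) * (μ ({ω | yhat ω = l} ∩ {ω | y ω = k})).toReal
           else 0) := by
    intro k l
    by_cases h : l = k
    · subst h
      rw [hnoise_diag l, if_pos rfl]
      field_simp [(hP0 l).ne']
      ring
    · rw [hnoise_off k l h, if_neg h]
      field_simp [(hP0 k).ne']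
      ring
  have hJ : coLabelCov μ y r yhat
      = refAgree μ r yhat - b - ((1 - e) - b) * trueAgree μ y yhat := by
    rw [coLabelCov, hAR, hAT]
    have hinner : ∀ k : Fin K,
        ∑ l : Fin K,
          ((μ ({ω | yhat ω = l} ∩ {ω | r ω = l} ∩ {ω | y ω = k})).toReal
            - (μ ({ω | yhat ω = l} ∩ {ω | y ω = k})).toReal
              * (μ ({ω | r ω = l} ∩ {ω | y ω = k})).toReal
              / (μ {ω | y ω = k}).toReal)
        = (∑ l : Fin K,
            (μ ({ω | yhat ω = l} ∩ {ω | r ω = l} ∩ {ω | y ω = k})).toReal)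
          - (b * (μ {ω | y ω = k}).toReal
             + ((1 - e) - b) * (μ ({ω | yhat ω = k} ∩ {ω | y ω = k})).toReal) := by
      intro k
      simp only [hterm]
      rw [Finset.sum_sub_distrib, Finset.sum_add_distrib, ← Finset.mul_sum, hQsum k,
        Finset.sum_ite_eq' Finset.univ k]
      simp
    simp only [hinner]
    rw [Finset.sum_sub_distrib, Finset.sum_add_distrib, ← Finset.mul_sum, hPsum,
      ← Finset.mul_sum]
    ring
  rw [hJ]
  field_simp
  ring
end
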